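/- For every left canonical Gauss code w on n letters, rev^LC(w) is left canonical and rev^LC(rev^LC(w)) = w; that is, rev^LC is an involution of the set of left canonical Gauss codes on n letters. -/

import Mathlib

/-- A Gauss code on `n` letters: a bijection from the `2*n` positions to
letters paired with a side (`false` = L, `true` = R). -/
abbrev GaussCode (n : ℕ) := Fin (2 * n) ≃ Fin n × Bool

instance (n : ℕ) [NeZero n] : NeZero (2 * n) := ⟨by have := NeZero.ne n; omega⟩

namespace GaussCode

variable {n : ℕ}

/-- `π_*(w)`: relabel the letters by the permutation `π`. -/
def permAct (π : Equiv.Perm (Fin n)) (w : GaussCode n) : GaussCode n :=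
  w.trans (π.prodCongr (Equiv.refl Bool))

open Fin.NatCast in
/-- `shift[m](w)`: the code whose entry at position `i` is the entry of `w` at
position `i + m` (mod `2n`). -/
def shift [NeZero n] (m : ℕ) (w : GaussCode n) : GaussCode n :=
  (Equiv.addRight ((m : Fin (2 * n)))).trans w

/-- `rev(w)`: the code whose entry at position `i` is the entry of `w` at
position `2n - 1 - i`. -/
def rev (w : GaussCode n) : GaussCode n :=
  (Fin.revPerm).trans w

/-- A Gauss code is left preferred if its `L`-entries appear in the order
`(1,L), (2,L), …, (n,L)` and its entry at position `0` is `(1,L)`. -/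
def IsLeftPreferred [NeZero n] (w : GaussCode n) : Prop :=
  StrictMono (fun j : Fin n => w.symm (j, false)) ∧ w 0 = (0, false)

/-- `proj^LP(w)`: relabel letters in the order of appearance of their `L`-entries,
then rotate so that `(1,L)` is at position `0`. -/
def projLP [NeZero n] (w : GaussCode n) : GaussCode n :=
  let π : Equiv.Perm (Fin n) := (Tuple.sort (fun j : Fin n => w.symm (j, false)))⁻¹
  let w' := permAct π w
  shift ((w'.symm ((0 : Fin n), false)).val) w'

/-- `shift^LP(w) := proj^LP(shift[1](w))`. -/
def shiftLP [NeZero n] (w : GaussCode n) : GaussCode n :=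
  projLP (shift 1 w)

/-- `rev^LP(w) := proj^LP(rev(w))`. -/
def revLP [NeZero n] (w : GaussCode n) : GaussCode n :=
  projLP (rev w)

/-- The value of an entry in the order `(1,L) < (1,R) < (2,L) < (2,R) < …`. -/
def entryKey (e : Fin n × Bool) : ℕ :=
  2 * e.1.val + (if e.2 then 1 else 0)

/-- Lexicographic (strict) order on Gauss codes, comparing entries position by
position in the order `(1,L) < (1,R) < (2,L) < (2,R) < …`. -/
def lexLt (w w' : GaussCode n) : Prop :=
  ∃ i : Fin (2 * n), (∀ k, k < i → w k = w' k) ∧ entryKey (w i) < entryKey (w' i)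

/-- Lexicographic order on Gauss codes. -/
def lexLe (w w' : GaussCode n) : Prop :=
  w = w' ∨ lexLt w w'

/-- A left preferred Gauss code is left canonical if it is the smallest element
of its `shift^LP`-orbit `{w, shift^LP(w), …, (shift^LP)^{n-1}(w)}`. -/
def IsLeftCanonical [NeZero n] (w : GaussCode n) : Prop :=
  IsLeftPreferred w ∧ ∀ k < n, lexLe w (shiftLP^[k] w)

/-- `proj^LC(w)`: the smallest element of the `shift^LP`-orbit of `proj^LP(w)`. -/
noncomputable def projLC [NeZero n] (w : GaussCode n) : GaussCode n :=
  letI := Classical.propDecidable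
  if h : ∃ v : GaussCode n, (∃ k < n, v = shiftLP^[k] (projLP w)) ∧
      ∀ k < n, lexLe v (shiftLP^[k] (projLP w))
  then h.choose else projLP w

/-- `rev^LC(w) := proj^LC(rev(w))`. -/
noncomputable def revLC [NeZero n] (w : GaussCode n) : GaussCode n :=
  projLC (rev w)

/-- Oriented equivalence of Gauss codes: `w' = shift[m](π_*(w))` for some
permutation `π` and integer `m`. -/
def OrientedEquiv [NeZero n] (w w' : GaussCode n) : Prop :=
  ∃ (π : Equiv.Perm (Fin n)) (m : ℕ), w' = shift m (permAct π w)

/-- Unoriented equivalence: `w` is orientedly equivalent to `w'` or to `rev(w')`. -/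
def UnorientedEquiv [NeZero n] (w w' : GaussCode n) : Prop :=
  OrientedEquiv w w' ∨ OrientedEquiv w (rev w')

/-- A Gauss code is 1-reducible if two cyclically adjacent entries share the same letter. -/
def OneReducible [NeZero n] (w : GaussCode n) : Prop :=
  ∃ i : Fin (2 * n), (w i).1 = (w (i + 1)).1

/-- A Gauss code is 2-reducible (cyclically, with `L = false`, `R = true`). -/
def TwoReducible [NeZero n] (w : GaussCode n) : Prop :=
  ∃ (i i' : Fin (2 * n)) (j k : Fin n), j ≠ k ∧
    ((w i = (j, false) ∧ w (i + 1) = (k, true) ∧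
        w i' = (j, true) ∧ w (i' + 1) = (k, false)) ∨
     (w i = (j, false) ∧ w (i + 1) = (k, true) ∧
        w i' = (k, false) ∧ w (i' + 1) = (j, true)) ∨
     (w i = (j, true) ∧ w (i + 1) = (k, false) ∧
        w i' = (k, true) ∧ w (i' + 1) = (j, false)))

/-- A Gauss code is minimal if it is neither 1-reducible nor 2-reducible. -/
def IsMinimal [NeZero n] (w : GaussCode n) : Prop :=
  ¬ OneReducible w ∧ ¬ TwoReducible w

/-- `σ_w`: the involution of positions sending each position to the unique other
position carrying the same letter. -/
def sigmaMap (w : GaussCode n) : Fin (2 * n) → Fin (2 * n) :=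
  fun i => w.symm ((w i).1, !(w i).2)

/-- `h_w`: the side (`false` = L, `true` = R) of the entry at each position. -/
def hMap (w : GaussCode n) : Fin (2 * n) → Bool :=
  fun i => (w i).2

end GaussCode
set_option linter.unusedSectionVars false

namespace GaussCode

open Function
open Fin.NatCast

variable {n : ℕ}

private lemma npos [NeZero n] : 0 < n := Nat.pos_of_ne_zero (NeZero.ne n)

private lemma fin_sub_val {N : ℕ} [NeZero N] {a b : Fin N} (h : b ≤ a) :
    (a - b).val = a.val - b.val := by
  rw [Fin.sub_def]
  have hb : b.val ≤ a.val := h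
  have ha := a.isLt
  have hbN := b.isLt
  have h1 : N - b.val + a.val = a.val - b.val + N := by omega
  simp only [h1, Nat.add_mod_right]
  exact Nat.mod_eq_of_lt (by omega)

lemma entryKey_injective : Function.Injective (entryKey (n := n)) := by
  rintro ⟨a, sa⟩ ⟨b, sb⟩ h
  unfold entryKey at h
  dsimp only at h
  cases sa <;> cases sb <;> simp only [if_true, Bool.false_eq_true, if_false] at h <;>
    first
      | (obtain rfl : a = b := Fin.ext (by omega); rfl)
      | omega

/-- The lexicographic key of a Gauss code. -/
def keyFun (w : GaussCode n) : Lex (Fin (2 * n) → ℕ) := toLex fun i => entryKey (w i)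

lemma keyFun_injective : Function.Injective (keyFun (n := n)) := by
  intro w w' h
  apply Equiv.ext
  intro i
  exact entryKey_injective (congrFun (toLex.injective h) i)

lemma lexLt_iff {w w' : GaussCode n} : lexLt w w' ↔ keyFun w < keyFun w' := by
  constructor
  · rintro ⟨i, h1, h2⟩
    exact ⟨i, fun j hj => congrArg entryKey (h1 j hj), h2⟩
  · rintro ⟨i, h1, h2⟩
    exact ⟨i, fun k hk => entryKey_injective (h1 k hk), h2⟩

lemma lexLe_iff {w w' : GaussCode n} : lexLe w w' ↔ keyFun w ≤ keyFun w' := by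
  rw [le_iff_lt_or_eq, lexLe, lexLt_iff]
  constructor
  · rintro (rfl | h)
    · exact Or.inr rfl
    · exact Or.inl h
  · rintro (h | h)
    · exact Or.inr h
    · exact Or.inl (keyFun_injective h)

lemma lexLe_antisymm {u v : GaussCode n} (h1 : lexLe u v) (h2 : lexLe v u) : u = v :=
  keyFun_injective (le_antisymm (lexLe_iff.mp h1) (lexLe_iff.mp h2))

variable [NeZero n]

lemma shift_apply (m : ℕ) (w : GaussCode n) (i : Fin (2 * n)) :
    shift m w i = w (i + (m : Fin (2 * n))) := rfl

lemma permAct_apply (π : Equiv.Perm (Fin n)) (w : GaussCode n) (i : Fin (2 * n)) :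
    permAct π w i = (π (w i).1, (w i).2) := rfl

lemma shift_shift (a b : ℕ) (w : GaussCode n) : shift a (shift b w) = shift (a + b) w := by
  apply Equiv.ext
  intro i
  show w (i + (a : Fin (2 * n)) + (b : Fin (2 * n))) = w (i + ((a + b : ℕ) : Fin (2 * n)))
  congr 1
  rw [Nat.cast_add, add_assoc]

lemma shift_zero (w : GaussCode n) : shift 0 w = w := by
  apply Equiv.ext
  intro i
  show w (i + ((0 : ℕ) : Fin (2 * n))) = w i
  rw [Nat.cast_zero, add_zero]

lemma shift_cast_congr {a b : ℕ} (h : (a : Fin (2 * n)) = (b : Fin (2 * n))) (w : GaussCode n) :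
    shift a w = shift b w := by
  apply Equiv.ext
  intro i
  show w (i + (a : Fin (2 * n))) = w (i + (b : Fin (2 * n)))
  rw [h]

lemma shift_permAct (m : ℕ) (π : Equiv.Perm (Fin n)) (w : GaussCode n) :
    shift m (permAct π w) = permAct π (shift m w) :=
  Equiv.ext fun _ => rfl

lemma permAct_permAct (π ρ : Equiv.Perm (Fin n)) (w : GaussCode n) :
    permAct π (permAct ρ w) = permAct (ρ.trans π) w :=
  Equiv.ext fun _ => rfl

lemma permAct_eq_self {π : Equiv.Perm (Fin n)} (h : ∀ j, π j = j) (w : GaussCode n) :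
    permAct π w = w :=
  Equiv.ext fun i => by rw [permAct_apply, h]

lemma shift_symm_apply (m : ℕ) (w : GaussCode n) (x : Fin n × Bool) :
    (shift m w).symm x = w.symm x - (m : Fin (2 * n)) := by
  show (Equiv.addRight _).symm (w.symm x) = _
  simp [Equiv.subRight, sub_eq_add_neg]

lemma permAct_symm_apply (π : Equiv.Perm (Fin n)) (w : GaussCode n) (j : Fin n) (s : Bool) :
    (permAct π w).symm (j, s) = w.symm (π.symm j, s) := by
  show w.symm ((π.prodCongr (Equiv.refl Bool)).symm (j, s)) = _
  rfl

lemma rev_apply (w : GaussCode n) (i : Fin (2 * n)) : rev w i = w i.rev := rfl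

lemma rev_rev_eq (w : GaussCode n) : rev (rev w) = w :=
  Equiv.ext fun i => by
    show w (Fin.rev (Fin.rev i)) = w i
    rw [Fin.rev_rev]

lemma rev_permAct (π : Equiv.Perm (Fin n)) (w : GaussCode n) :
    rev (permAct π w) = permAct π (rev w) :=
  Equiv.ext fun _ => rfl

private lemma dvd_helper (m : ℕ) : 2 * n ∣ m + (2 * n - m % (2 * n)) := by
  have h1 : 2 * n * (m / (2 * n)) + m % (2 * n) = m := Nat.div_add_mod m (2 * n)
  have h2 : m % (2 * n) < 2 * n := Nat.mod_lt _ (by have := npos (n := n); omega)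
  exact ⟨m / (2 * n) + 1, by rw [Nat.mul_add, Nat.mul_one]; omega⟩

lemma rev_shift (m : ℕ) (w : GaussCode n) :
    rev (shift m w) = shift (2 * n - m % (2 * n)) (rev w) := by
  apply Equiv.ext
  intro i
  show w (Fin.rev i + (m : Fin (2 * n))) = w (Fin.rev (i + ((2 * n - m % (2 * n) : ℕ) : Fin (2 * n))))
  congr 1
  rw [Fin.rev_add, sub_eq_add_neg]
  congr 1
  have h0 : ((m : ℕ) : Fin (2 * n)) + ((2 * n - m % (2 * n) : ℕ) : Fin (2 * n)) = 0 := by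
    rw [← Nat.cast_add, Fin.natCast_eq_zero]
    exact dvd_helper m
  exact (neg_eq_of_add_eq_zero_left h0).symm

lemma shift_cancel (m : ℕ) (w : GaussCode n) :
    shift (2 * n - m % (2 * n)) (shift m w) = w := by
  rw [shift_shift]
  have h : (((2 * n - m % (2 * n)) + m : ℕ) : Fin (2 * n)) = ((0 : ℕ) : Fin (2 * n)) := by
    rw [Nat.cast_zero, Fin.natCast_eq_zero, Nat.add_comm]
    exact dvd_helper m
  rw [shift_cast_congr h, shift_zero]

lemma oe_symm {v v' : GaussCode n} (h : OrientedEquiv v v') : OrientedEquiv v' v := by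
  obtain ⟨π, m, rfl⟩ := h
  refine ⟨π⁻¹, 2 * n - m % (2 * n), ?_⟩
  rw [← shift_permAct, permAct_permAct, shift_cancel]
  exact (permAct_eq_self (fun j => by simp) v).symm

/-! ### The `projLP` machinery -/

/-- The position of the `L`-entry of each letter. -/
def lfun (w : GaussCode n) : Fin n → Fin (2 * n) := fun j => w.symm (j, false)

lemma lfun_injective (w : GaussCode n) : Function.Injective (lfun w) := fun a b h => by
  have h2 := w.symm.injective h
  exact (Prod.mk.injEq _ _ _ _ ▸ h2).1

/-- The canonically relabeled code. -/
def after (w : GaussCode n) : GaussCode n := permAct (Tuple.sort (lfun w))⁻¹ w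

/-- The shift amount used by `projLP`. -/
def samt (w : GaussCode n) : ℕ := ((after w).symm (0, false)).val

lemma projLP_eq (w : GaussCode n) : projLP w = shift (samt w) (after w) := rfl

lemma after_symm (w : GaussCode n) (j : Fin n) :
    (after w).symm (j, false) = lfun w (Tuple.sort (lfun w) j) := by
  rw [after, permAct_symm_apply]
  rfl

lemma after_strictMono (w : GaussCode n) :
    StrictMono (fun j => (after w).symm (j, false)) := by
  have hmono : Monotone (fun j => (after w).symm (j, false)) := by
    intro a b hab
    show (after w).symm (a, false) ≤ (after w).symm (b, false)
    rw [after_symm, after_symm]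
    exact Tuple.monotone_sort (lfun w) hab
  apply hmono.strictMono_of_injective
  intro a b hab
  exact (Prod.mk.injEq _ _ _ _ ▸ (after w).symm.injective hab).1

lemma after_symm_zero_le (w : GaussCode n) (j : Fin n) :
    (after w).symm (0, false) ≤ lfun w j := by
  have h1 : (after w).symm (0, false) ≤ (after w).symm ((Tuple.sort (lfun w)).symm j, false) :=
    (after_strictMono w).monotone (Fin.zero_le _)
  rwa [after_symm w ((Tuple.sort (lfun w)).symm j), Equiv.apply_symm_apply] at h1

lemma isLeftPreferred_projLP (w : GaussCode n) : IsLeftPreferred (projLP w) := by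
  have hcast : ((samt w : ℕ) : Fin (2 * n)) = (after w).symm (0, false) := Fin.cast_val_eq_self _
  constructor
  · intro a b hab
    show (projLP w).symm (a, false) < (projLP w).symm (b, false)
    rw [projLP_eq, shift_symm_apply, shift_symm_apply, hcast]
    have hlt : (after w).symm (a, false) < (after w).symm (b, false) := after_strictMono w hab
    have hla : (after w).symm (0, false) ≤ (after w).symm (a, false) :=
      (after_strictMono w).monotone (Fin.zero_le _)
    have hlb : (after w).symm (0, false) ≤ (after w).symm (b, false) :=
      (after_strictMono w).monotone (Fin.zero_le _)
    rw [Fin.lt_def, fin_sub_val hla, fin_sub_val hlb]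
    have := hla.trans hlt.le
    rw [Fin.lt_def] at hlt
    rw [Fin.le_def] at hla hlb
    omega
  · rw [projLP_eq, shift_apply, zero_add, hcast, Equiv.apply_symm_apply]

lemma projLP_of_isLeftPreferred {w : GaussCode n} (hw : IsLeftPreferred w) : projLP w = w := by
  have hsort : Tuple.sort (lfun w) = Equiv.refl _ :=
    Tuple.sort_eq_refl_iff_monotone.mpr hw.1.monotone
  have hafter : after w = w := by
    rw [after, hsort]
    exact permAct_eq_self (fun j => by simp) w
  have hs : samt w = 0 := by
    rw [samt, hafter]
    have : w.symm (0, false) = 0 := by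
      rw [Equiv.symm_apply_eq, hw.2]
    rw [this]
    rfl
  rw [projLP_eq, hafter, hs, shift_zero]

lemma sort_unique {m : ℕ} {α : Type*} [LinearOrder α] {f : Fin m → α}
    (hf : Function.Injective f) {σ : Equiv.Perm (Fin m)} (h : Monotone (f ∘ σ)) :
    σ = Tuple.sort f := by
  have h2 := Tuple.unique_monotone h (Tuple.monotone_sort f)
  exact Equiv.ext fun i => hf (congrFun h2 i)

lemma after_permAct (ρ : Equiv.Perm (Fin n)) (w : GaussCode n) :
    after (permAct ρ w) = after w := by
  have hl : lfun (permAct ρ w) = fun j => lfun w (ρ.symm j) :=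
    funext fun j => permAct_symm_apply ρ w j false
  have hσ : Tuple.sort (lfun (permAct ρ w)) = (Tuple.sort (lfun w)).trans ρ := by
    symm
    apply sort_unique
    · rw [hl]
      exact (lfun_injective w).comp ρ.symm.injective
    · have : lfun (permAct ρ w) ∘ ⇑((Tuple.sort (lfun w)).trans ρ)
          = lfun w ∘ ⇑(Tuple.sort (lfun w)) := by
        funext j
        simp [hl, Equiv.trans_apply]
      rw [this]
      exact Tuple.monotone_sort (lfun w)
  rw [after, after, hσ, permAct_permAct]
  congr 1
  apply Equiv.ext
  intro j
  show ((Tuple.sort (lfun w)).trans ρ)⁻¹ (ρ j) = (Tuple.sort (lfun w))⁻¹ j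
  simp [Equiv.Perm.inv_def, Equiv.symm_trans_apply]

lemma samt_permAct (ρ : Equiv.Perm (Fin n)) (w : GaussCode n) :
    samt (permAct ρ w) = samt w := by
  rw [samt, samt, after_permAct]

lemma projLP_permAct (ρ : Equiv.Perm (Fin n)) (w : GaussCode n) :
    projLP (permAct ρ w) = projLP w := by
  rw [projLP_eq, projLP_eq, after_permAct, samt_permAct]

lemma shiftLP_projLP (w : GaussCode n) :
    shiftLP (projLP w) = projLP (shift (1 + samt w) w) := by
  rw [shiftLP, projLP_eq w, shift_shift, after, shift_permAct, projLP_permAct]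

lemma val_one_2n : ((1 : Fin (2 * n))).val = 1 := by
  have h := npos (n := n)
  rw [Fin.val_one']
  exact Nat.mod_eq_of_lt (by omega)

lemma val_ne_zero_2n {x : Fin (2 * n)} (hx : x ≠ 0) : x.val ≠ 0 := by
  intro h
  exact hx (Fin.ext (by simp [h]))

lemma one_le_of_ne_zero {x : Fin (2 * n)} (hx : x ≠ 0) : (1 : Fin (2 * n)) ≤ x := by
  rw [Fin.le_def, val_one_2n]
  have := val_ne_zero_2n hx
  omega

/-- Claim A: shifting past an `R`-position does not change `projLP`. -/
lemma projLP_shift_one_of_true {w : GaussCode n} (hw : (w 0).2 = true) :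
    projLP (shift 1 w) = projLP w := by
  have h0 : ∀ j, lfun w j ≠ 0 := by
    intro j hj
    have : w 0 = (j, false) := by rw [← hj, lfun, Equiv.apply_symm_apply]
    rw [this] at hw
    simp at hw
  have hl : lfun (shift 1 w) = fun j => lfun w j - 1 := by
    funext j
    rw [lfun, shift_symm_apply, Nat.cast_one]
    rfl
  have hσ : Tuple.sort (lfun (shift 1 w)) = Tuple.sort (lfun w) := by
    symm
    apply sort_unique
    · rw [hl]
      intro a b hab
      exact lfun_injective w (by rwa [sub_left_inj] at hab)
    · intro a b hab
      show lfun (shift 1 w) (Tuple.sort (lfun w) a) ≤ lfun (shift 1 w) (Tuple.sort (lfun w) b)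
      rw [hl]
      have hmono : lfun w (Tuple.sort (lfun w) a) ≤ lfun w (Tuple.sort (lfun w) b) :=
        Tuple.monotone_sort (lfun w) hab
      have h1a := one_le_of_ne_zero (h0 (Tuple.sort (lfun w) a))
      have h1b := one_le_of_ne_zero (h0 (Tuple.sort (lfun w) b))
      rw [Fin.le_def, fin_sub_val h1a, fin_sub_val h1b]
      rw [Fin.le_def] at hmono
      omega
  have hafter : after (shift 1 w) = shift 1 (after w) := by
    rw [after, after, hσ, shift_permAct]
  have hzero : (after w).symm (0, false) ≠ 0 := by
    rw [after_symm]
    exact h0 _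
  have h1s := one_le_of_ne_zero hzero
  have hs : samt (shift 1 w) = samt w - 1 := by
    rw [samt, samt, hafter, shift_symm_apply, Nat.cast_one, fin_sub_val h1s, val_one_2n]
  have hsge : 1 ≤ samt w := by
    rw [samt]
    have := val_ne_zero_2n hzero
    omega
  rw [projLP_eq, hafter, hs, shift_shift, projLP_eq w]
  congr 1
  omega

lemma samt_eq_zero_of_false {w : GaussCode n} (hw : (w 0).2 = false) : samt w = 0 := by
  have h1 : w 0 = ((w 0).1, false) := by
    rw [← hw]
  have h2 : lfun w (w 0).1 = 0 := by
    rw [lfun, Equiv.symm_apply_eq, ← h1]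
  have h3 := after_symm_zero_le w (w 0).1
  rw [h2, Fin.le_def] at h3
  simp only [Fin.val_zero] at h3
  rw [samt]
  omega

/-- Walking over a stretch of `R`-positions does not change `projLP`. -/
lemma projLP_walk (w : GaussCode n) (a b : ℕ) (hab : a ≤ b)
    (h : ∀ r, a ≤ r → r < b → (w ((r : ℕ) : Fin (2 * n))).2 = true) :
    projLP (shift b w) = projLP (shift a w) := by
  induction b, hab using Nat.le_induction with
  | base => rfl
  | succ b hb ih =>
    have hstep : shift (b + 1) w = shift 1 (shift b w) := by
      rw [shift_shift, Nat.add_comm]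
    have hside : ((shift b w) 0).2 = true := by
      rw [shift_apply, zero_add]
      exact h b hb (by omega)
    rw [hstep, projLP_shift_one_of_true hside]
    exact ih fun r hr hrb => h r hr (by omega)

/-- Characterisation of `L`-positions. -/
lemma eq_lfun_of_false {w : GaussCode n} {p : Fin (2 * n)} (hp : (w p).2 = false) :
    p = lfun w (w p).1 := by
  rw [lfun, Equiv.eq_symm_apply]
  rw [← hp]

lemma iter_formula {w : GaussCode n} (hw : IsLeftPreferred w) :
    ∀ k, ∀ hk : k < n, shiftLP^[k + 1] w = projLP (shift ((lfun w ⟨k, hk⟩).val + 1) w) := by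
  have hsm : StrictMono (lfun w) := hw.1
  have hl0 : lfun w 0 = 0 := by
    rw [lfun, Equiv.symm_apply_eq, hw.2]
  intro k
  induction k with
  | zero =>
    intro hk
    have : (⟨0, hk⟩ : Fin n) = 0 := rfl
    rw [this, hl0]
    rw [Function.iterate_one, shiftLP]
    rfl
  | succ k ih =>
    intro hk
    have hk' : k < n := Nat.lt_of_succ_lt hk
    rw [Function.iterate_succ_apply', ih hk']
    have hlt : lfun w ⟨k, hk'⟩ < lfun w ⟨k + 1, hk⟩ := hsm (by simp [Fin.lt_def])
    rw [Fin.lt_def] at hlt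
    have hwalk : projLP (shift ((lfun w ⟨k + 1, hk⟩).val) w)
        = projLP (shift ((lfun w ⟨k, hk'⟩).val + 1) w) := by
      apply projLP_walk
      · omega
      · intro r hr hrb
        by_contra hside
        have hfalse : (w ((r : ℕ) : Fin (2 * n))).2 = false := by
          revert hside; cases (w ((r : ℕ) : Fin (2 * n))).2 <;> simp
        have hrlt : r < 2 * n := by
          have := (lfun w ⟨k + 1, hk⟩).isLt
          omega
        have hrval : (((r : ℕ) : Fin (2 * n))).val = r := Fin.val_cast_of_lt hrlt
        have heq := eq_lfun_of_false hfalse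
        set j := (w ((r : ℕ) : Fin (2 * n))).1
        have h1 : lfun w ⟨k, hk'⟩ < lfun w j := by
          rw [Fin.lt_def, ← heq, hrval]
          omega
        have h2 : lfun w j < lfun w ⟨k + 1, hk⟩ := by
          rw [Fin.lt_def, ← heq, hrval]
          omega
        have hj1 : (⟨k, hk'⟩ : Fin n) < j := hsm.lt_iff_lt.mp h1
        have hj2 : j < (⟨k + 1, hk⟩ : Fin n) := hsm.lt_iff_lt.mp h2
        rw [Fin.lt_def] at hj1 hj2
        simp at hj1 hj2
        omega
    rw [← hwalk]
    have hside0 : ((shift ((lfun w ⟨k + 1, hk⟩).val) w) 0).2 = false := by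
      rw [shift_apply, zero_add, Fin.cast_val_eq_self, lfun, Equiv.apply_symm_apply]
    rw [shiftLP_projLP, samt_eq_zero_of_false hside0, shift_shift]
    have hnat : 1 + 0 + (lfun w ⟨k + 1, hk⟩).val = (lfun w ⟨k + 1, hk⟩).val + 1 := by omega
    rw [hnat]

/-- Periodicity: `shiftLP` iterated `n` times fixes left preferred codes. -/
lemma shiftLP_iterate_n {w : GaussCode n} (hw : IsLeftPreferred w) : shiftLP^[n] w = w := by
  have hn := npos (n := n)
  obtain ⟨k, hkn⟩ : ∃ k, k + 1 = n := ⟨n - 1, by omega⟩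
  have hk : k < n := by omega
  have h1 : shiftLP^[n] w = projLP (shift ((lfun w ⟨k, hk⟩).val + 1) w) := by
    have h1' := iter_formula hw k hk
    rwa [hkn] at h1'
  have hsm : StrictMono (lfun w) := hw.1
  have hwalk : projLP (shift (2 * n) w) = projLP (shift ((lfun w ⟨k, hk⟩).val + 1) w) := by
    apply projLP_walk
    · have := (lfun w ⟨k, hk⟩).isLt
      omega
    · intro r hr hrb
      by_contra hside
      have hfalse : (w ((r : ℕ) : Fin (2 * n))).2 = false := by
        revert hside; cases (w ((r : ℕ) : Fin (2 * n))).2 <;> simp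
      have hrval : (((r : ℕ) : Fin (2 * n))).val = r := Fin.val_cast_of_lt hrb
      have heq := eq_lfun_of_false hfalse
      set j := (w ((r : ℕ) : Fin (2 * n))).1
      have hle : j ≤ (⟨k, hk⟩ : Fin n) := by
        rw [Fin.le_def]
        show j.val ≤ k
        have := j.isLt
        omega
      have := hsm.monotone hle
      rw [← heq, Fin.le_def, hrval] at this
      omega
  have h2n : shift (2 * n) w = w := by
    have : ((2 * n : ℕ) : Fin (2 * n)) = ((0 : ℕ) : Fin (2 * n)) := by
      rw [Nat.cast_zero, Fin.natCast_self]
    rw [shift_cast_congr this, shift_zero]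
  rw [h1, ← hwalk, h2n, projLP_of_isLeftPreferred hw]

lemma shiftLP_iterate_mul {w : GaussCode n} (hw : IsLeftPreferred w) (q : ℕ) :
    shiftLP^[n * q] w = w := by
  induction q with
  | zero => rfl
  | succ q ih =>
    have : n * (q + 1) = n * q + n := by ring
    rw [this, Function.iterate_add_apply, shiftLP_iterate_n hw, ih]

lemma shiftLP_iterate_mod {w : GaussCode n} (hw : IsLeftPreferred w) (a : ℕ) :
    shiftLP^[a] w = shiftLP^[a % n] w := by
  have h1 : a = a % n + n * (a / n) := by
    have := Nat.div_add_mod a n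
    omega
  conv_lhs => rw [h1]
  rw [Function.iterate_add_apply, shiftLP_iterate_mul hw]

lemma orbit_eq_proj_shift (v : GaussCode n) (k : ℕ) :
    ∃ p : ℕ, shiftLP^[k] (projLP v) = projLP (shift p v) := by
  induction k with
  | zero => exact ⟨0, by rw [shift_zero, Function.iterate_zero_apply]⟩
  | succ k ih =>
    obtain ⟨p, hp⟩ := ih
    refine ⟨1 + samt (shift p v) + p, ?_⟩
    rw [Function.iterate_succ_apply', hp, shiftLP_projLP, shift_shift]

lemma isLeftPreferred_orbit (v : GaussCode n) (k : ℕ) :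
    IsLeftPreferred (shiftLP^[k] (projLP v)) := by
  obtain ⟨p, hp⟩ := orbit_eq_proj_shift v k
  rw [hp]
  exact isLeftPreferred_projLP _

lemma proj_shift_mem_orbit (v : GaussCode n) (p : ℕ) :
    ∃ k < n, projLP (shift p v) = shiftLP^[k] (projLP v) := by
  have hn := npos (n := n)
  induction p with
  | zero => exact ⟨0, hn, by rw [shift_zero, Function.iterate_zero_apply]⟩
  | succ p ih =>
    obtain ⟨k, hk, hkeq⟩ := ih
    have hstep : shift (p + 1) v = shift 1 (shift p v) := by
      rw [shift_shift, Nat.add_comm]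
    by_cases hside : ((shift p v) 0).2 = true
    · exact ⟨k, hk, by rw [hstep, projLP_shift_one_of_true hside, hkeq]⟩
    · have hfalse : ((shift p v) 0).2 = false := by
        revert hside; cases ((shift p v) 0).2 <;> simp
      have h1 : projLP (shift 1 (shift p v)) = shiftLP (projLP (shift p v)) := by
        rw [shiftLP_projLP, samt_eq_zero_of_false hfalse]
      rw [hstep, h1, hkeq]
      have h2 : shiftLP (shiftLP^[k] (projLP v)) = shiftLP^[k + 1] (projLP v) :=
        (Function.iterate_succ_apply' shiftLP k (projLP v)).symm
      rw [h2]
      rcases Nat.lt_or_ge (k + 1) n with h | h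
      · exact ⟨k + 1, h, rfl⟩
      · have hk1 : k + 1 = n := by omega
        rw [hk1, shiftLP_iterate_n (isLeftPreferred_projLP v)]
        exact ⟨0, hn, rfl⟩

lemma inOrbit_of_oriented {v v' : GaussCode n} (h : OrientedEquiv v v') {u : GaussCode n}
    (hu : ∃ k < n, u = shiftLP^[k] (projLP v')) :
    ∃ k < n, u = shiftLP^[k] (projLP v) := by
  obtain ⟨π, m, rfl⟩ := h
  obtain ⟨k, hk, rfl⟩ := hu
  obtain ⟨p, hp⟩ := orbit_eq_proj_shift (shift m (permAct π v)) k
  rw [hp, shift_shift, shift_permAct, projLP_permAct]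
  obtain ⟨k', hk', hkeq'⟩ := proj_shift_mem_orbit v (p + m)
  exact ⟨k', hk', hkeq'⟩

lemma lexLe_refl (u : GaussCode n) : lexLe u u := Or.inl rfl

lemma lexLe_trans {a b c : GaussCode n} (h1 : lexLe a b) (h2 : lexLe b c) : lexLe a c := by
  rw [lexLe_iff] at h1 h2 ⊢
  exact le_trans h1 h2

lemma lexLe_total (u v : GaussCode n) : lexLe u v ∨ lexLe v u := by
  classical
  by_cases h : u = v
  · exact Or.inl (Or.inl h)
  have hne : ∃ i, u i ≠ v i := by
    by_contra hc
    push_neg at hc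
    exact h (Equiv.ext hc)
  set s : Finset (Fin (2 * n)) := Finset.univ.filter (fun i => u i ≠ v i) with hs_def
  have hs : s.Nonempty := ⟨hne.choose, by simp [hs_def, hne.choose_spec]⟩
  set i₀ := s.min' hs with hi₀
  have hi₀mem : u i₀ ≠ v i₀ := by
    have h2 := s.min'_mem hs
    rw [← hi₀] at h2
    rw [hs_def] at h2
    simpa using h2
  have hpre : ∀ k, k < i₀ → u k = v k := by
    intro k hk
    by_contra hc
    have hk' : k ∈ s := by simp [hs_def, hc]
    exact absurd (s.min'_le k hk') (not_le.mpr hk)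
  have hkey : entryKey (u i₀) ≠ entryKey (v i₀) := fun hc => hi₀mem (entryKey_injective hc)
  rcases Nat.lt_or_ge (entryKey (u i₀)) (entryKey (v i₀)) with h1 | h1
  · exact Or.inl (Or.inr ⟨i₀, hpre, h1⟩)
  · exact Or.inr (Or.inr ⟨i₀, fun k hk => (hpre k hk).symm, by omega⟩)

lemma exists_min_fun (g : ℕ → GaussCode n) :
    ∀ m : ℕ, 0 < m → ∃ k < m, ∀ j < m, lexLe (g k) (g j) := by
  intro m
  induction m with
  | zero => omega
  | succ m ih =>
    intro _
    rcases Nat.eq_zero_or_pos m with rfl | hm'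
    · refine ⟨0, by omega, fun j hj => ?_⟩
      have : j = 0 := by omega
      subst this
      exact lexLe_refl _
    obtain ⟨k, hk, hmin⟩ := ih hm'
    rcases lexLe_total (g k) (g m) with h | h
    · refine ⟨k, by omega, fun j hj => ?_⟩
      rcases Nat.lt_or_ge j m with hj' | hj'
      · exact hmin j hj'
      · have : j = m := by omega
        subst this
        exact h
    · refine ⟨m, by omega, fun j hj => ?_⟩
      rcases Nat.lt_or_ge j m with hj' | hj'
      · exact lexLe_trans h (hmin j hj')
      · have : j = m := by omega
        subst this
        exact lexLe_refl _

lemma projLC_spec (v : GaussCode n) :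
    (∃ k < n, projLC v = shiftLP^[k] (projLP v)) ∧
      ∀ k < n, lexLe (projLC v) (shiftLP^[k] (projLP v)) := by
  have hex : ∃ u : GaussCode n, (∃ k < n, u = shiftLP^[k] (projLP v)) ∧
      ∀ k < n, lexLe u (shiftLP^[k] (projLP v)) := by
    obtain ⟨k₀, hk₀, hmin⟩ := exists_min_fun (fun k => shiftLP^[k] (projLP v)) n (npos (n := n))
    exact ⟨shiftLP^[k₀] (projLP v), ⟨k₀, hk₀, rfl⟩, hmin⟩
  have hLC : projLC v = hex.choose := by
    unfold projLC
    exact dif_pos hex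
  rw [hLC]
  exact hex.choose_spec

lemma isLeftCanonical_projLC (v : GaussCode n) : IsLeftCanonical (projLC v) := by
  obtain ⟨⟨k₀, hk₀, hEq⟩, hmin⟩ := projLC_spec v
  refine ⟨by rw [hEq]; exact isLeftPreferred_orbit v k₀, fun k hk => ?_⟩
  have h1 : shiftLP^[k] (projLC v) = shiftLP^[(k + k₀) % n] (projLP v) := by
    rw [hEq, ← Function.iterate_add_apply,
      shiftLP_iterate_mod (isLeftPreferred_projLP v)]
  rw [h1]
  exact hmin _ (Nat.mod_lt _ (npos (n := n)))

lemma projLC_eq_of_oriented {v v' : GaussCode n} (h : OrientedEquiv v v') :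
    projLC v' = projLC v := by
  obtain ⟨⟨k, hk, hEq⟩, hmin⟩ := projLC_spec v
  obtain ⟨⟨k', hk', hEq'⟩, hmin'⟩ := projLC_spec v'
  obtain ⟨j, hj, hjEq⟩ := inOrbit_of_oriented h ⟨k', hk', hEq'⟩
  obtain ⟨j', hj', hjEq'⟩ := inOrbit_of_oriented (oe_symm h) ⟨k, hk, hEq⟩
  apply lexLe_antisymm
  · rw [hjEq']
    exact hmin' j' hj'
  · rw [hjEq]
    exact hmin j hj

lemma projLC_eq_of_canonical {w : GaussCode n} (hw : IsLeftCanonical w) : projLC w = w := by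
  obtain ⟨⟨k, hk, hEq⟩, hmin⟩ := projLC_spec w
  have hplp := projLP_of_isLeftPreferred hw.1
  apply lexLe_antisymm
  · have h0 := hmin 0 (npos (n := n))
    rwa [Function.iterate_zero_apply, hplp] at h0
  · rw [hEq, hplp]
    exact hw.2 k hk

lemma oe_projLC (v : GaussCode n) : OrientedEquiv v (projLC v) := by
  obtain ⟨⟨k, hk, hEq⟩, -⟩ := projLC_spec v
  obtain ⟨p, hp⟩ := orbit_eq_proj_shift v k
  rw [hEq, hp, projLP_eq, after]
  refine ⟨(Tuple.sort (lfun (shift p v)))⁻¹, samt (shift p v) + p, ?_⟩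
  rw [← shift_permAct, ← shift_shift, shift_permAct]

lemma oe_rev {v v' : GaussCode n} (h : OrientedEquiv v v') :
    OrientedEquiv (rev v) (rev v') := by
  obtain ⟨π, m, rfl⟩ := h
  exact ⟨π, 2 * n - m % (2 * n), by rw [rev_shift, rev_permAct]⟩

end GaussCode

open GaussCode in
/-- `rev^LC` is an involution of the set of left canonical Gauss codes. -/
theorem stmt12 (n : ℕ) [NeZero n] (w : GaussCode n) (hw : IsLeftCanonical w) :
    IsLeftCanonical (revLC w) ∧ revLC (revLC w) = w := by
  refine ⟨isLeftCanonical_projLC _, ?_⟩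
  show projLC (rev (projLC (rev w))) = w
  have h1 : OrientedEquiv (rev w) (projLC (rev w)) := oe_projLC _
  have h2 : OrientedEquiv w (rev (projLC (rev w))) := by
    have h3 := oe_rev h1
    rwa [rev_rev_eq] at h3
  rw [projLC_eq_of_oriented h2, projLC_eq_of_canonical hw]
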